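/- Suppose Assumptions (A1) and (A2) hold for cost functions E_1,…,E_M, and let α > 0 and N, M, d be positive integers. Define F_N^m : ℝ^{M·N·d} → ℝ^d by F_N^m(X^1,…,X^M) := Σ_{i=1}^N [e^{−α E_m(X^{m,i}; M^{−m})} / Σ_{j=1}^N e^{−α E_m(X^{m,j}; M^{−m})}] · X^{m,i}, where X^m = (X^{m,1},…,X^{m,N}) with each X^{m,i} ∈ ℝ^d, and M^{−m} := (1/N) Σ_{i=1}^N (X^{1,i},…,X^{m−1,i},X^{m+1,i},…,X^{M,i}). Then for every R > 0 there exists C > 0 (depending on R and N) such that |F_N^m(X_0) − F_N^m(X_1)| ≤ C |X_0 − X_1| for all X_0, X_1 ∈ ℝ^{M·N·d} with max(|X_0|, |X_1|) ≤ R. -/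

import Mathlib

set_option maxHeartbeats 1000000


open MeasureTheory Finset
open scoped ENNReal NNReal

noncomputable section

/-- `ℝ^d` with the Euclidean norm. -/
abbrev Vec (d : ℕ) := EuclideanSpace ℝ (Fin d)

/-- `ℝ^{M·d}`, the space of opponents' strategies, with the Euclidean norm. -/
abbrev Opp (M d : ℕ) := EuclideanSpace ℝ (Fin M × Fin d)

/-- Euclidean norm of the concatenated vector `(x, y) ∈ ℝ^d × ℝ^{M·d}`. -/
def pairNorm {d M : ℕ} (x : Vec d) (y : Opp M d) : ℝ :=
  Real.sqrt (‖x‖ ^ 2 + ‖y‖ ^ 2)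

/-- Given strategies `Z^1, …, Z^{M+1}`, the vector `Z^{-m}` of all strategies except the
`m`-th one. -/
def oppOf {M d : ℕ} (m : Fin (M + 1)) (Z : Fin (M + 1) → Vec d) : Opp M d :=
  WithLp.toLp 2 fun p : Fin M × Fin d => Z (m.succAbove p.1) p.2

/-- The consensus point `X_α(ρ, Y) = (∫ x e^{-α E(x;Y)} dρ)/(∫ e^{-α E(x;Y)} dρ)`. -/
def consensus {d M : ℕ} (α : ℝ) (Em : Vec d → Opp M d → ℝ)
    (ρ : Measure (Vec d)) (Y : Opp M d) : Vec d :=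
  (∫ x, Real.exp (-α * Em x Y) ∂ρ)⁻¹ • ∫ x, Real.exp (-α * Em x Y) • x ∂ρ

/-- The mean `E[μ] = ∫ x dμ(x)` of a measure on `ℝ^d`. -/
def meanOf {d : ℕ} (μ : Measure (Vec d)) : Vec d := ∫ x, x ∂μ

/-- The empirical measure `(1/N) ∑_{i} δ_{X_i}`. -/
def empMeas {d N : ℕ} (X : Fin N → Vec d) : Measure (Vec d) :=
  (N : ℝ≥0∞)⁻¹ • ∑ i, Measure.dirac (X i)

/-- The `p`-Wasserstein distance, as an infimum over couplings. -/
def Wdist {d : ℕ} (p : ℝ) (μ ν : Measure (Vec d)) : ℝ :=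
  (sInf { e : ℝ≥0∞ | ∃ π : Measure (Vec d × Vec d), IsProbabilityMeasure π ∧
      π.map Prod.fst = μ ∧ π.map Prod.snd = ν ∧
      e = (∫⁻ z, (‖z.1 - z.2‖₊ : ℝ≥0∞) ^ p ∂π) ^ (1 / p) }).toReal

/-- Euclidean norm of a configuration `X = (X^{m,i}) ∈ ℝ^{(M+1)·N·d}`. -/
def confNorm {d M N : ℕ} (X : Fin (M + 1) → Fin N → Vec d) : ℝ :=
  Real.sqrt (∑ m, ∑ i, ‖X m i‖ ^ 2)

/-- The weighted-mean map `F_N^m(X) = ∑_i (ω_i / ∑_j ω_j) • X^{m,i}` with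
`ω_i = e^{-α E_m(X^{m,i}; M^{-m})}`, where `M^{-m}` is the average over `i` of the
opponents' strategies. -/
def FNmap {d M N : ℕ} (α : ℝ) (E : Fin (M + 1) → Vec d → Opp M d → ℝ)
    (m : Fin (M + 1)) (X : Fin (M + 1) → Fin N → Vec d) : Vec d :=
  let Mneg : Opp M d := oppOf m fun l => (N : ℝ)⁻¹ • ∑ i, X l i
  ∑ i, (Real.exp (-α * E m (X m i) Mneg) / ∑ j, Real.exp (-α * E m (X m j) Mneg)) • X m i

-- aux lemmas
lemma pairNorm_nonneg' {d M : ℕ} (x : Vec d) (y : Opp M d) : 0 ≤ pairNorm x y :=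
  Real.sqrt_nonneg _

lemma pairNorm_le' {d M : ℕ} (x : Vec d) (y : Opp M d) : pairNorm x y ≤ ‖x‖ + ‖y‖ := by
  have h : ‖x‖^2 + ‖y‖^2 ≤ (‖x‖+‖y‖)^2 := by nlinarith [norm_nonneg x, norm_nonneg y]
  calc pairNorm x y ≤ Real.sqrt ((‖x‖+‖y‖)^2) := Real.sqrt_le_sqrt h
    _ = ‖x‖+‖y‖ := Real.sqrt_sq (by positivity)

lemma norm_le_confNorm' {d M N : ℕ} (X : Fin (M + 1) → Fin N → Vec d)
    (m : Fin (M+1)) (i : Fin N) : ‖X m i‖ ≤ confNorm X := by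
  have h1 : ‖X m i‖^2 ≤ ∑ m', ∑ i', ‖X m' i'‖^2 := by
    calc ‖X m i‖^2 ≤ ∑ i', ‖X m i'‖^2 :=
          Finset.single_le_sum (f := fun i' => ‖X m i'‖^2) (fun _ _ => sq_nonneg _) (mem_univ i)
      _ ≤ ∑ m', ∑ i', ‖X m' i'‖^2 :=
          Finset.single_le_sum (f := fun m' => ∑ i', ‖X m' i'‖^2) (fun _ _ => Finset.sum_nonneg fun _ _ => sq_nonneg _) (mem_univ m)
  calc ‖X m i‖ = Real.sqrt (‖X m i‖^2) := (Real.sqrt_sq (norm_nonneg _)).symm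
    _ ≤ confNorm X := Real.sqrt_le_sqrt h1

lemma norm_oppOf_le' {M d : ℕ} (m : Fin (M+1)) (Z : Fin (M+1) → Vec d) (r : ℝ) (hr : 0 ≤ r)
    (h : ∀ l, ‖Z l‖ ≤ r) : ‖oppOf m Z‖ ≤ M * r := by
  have hsq : ∀ w : Fin (M+1), ∑ k, ‖Z w k‖^2 = ‖Z w‖^2 := by
    intro w
    rw [EuclideanSpace.norm_eq, Real.sq_sqrt (Finset.sum_nonneg fun _ _ => sq_nonneg _)]
  have h1 : ‖oppOf m Z‖ = Real.sqrt (∑ l, ‖Z (m.succAbove l)‖^2) := by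
    rw [EuclideanSpace.norm_eq]
    congr 1
    rw [Fintype.sum_prod_type]
    exact Finset.sum_congr rfl fun l _ => hsq (m.succAbove l)
  have h2 : ∑ l : Fin M, ‖Z (m.succAbove l)‖^2 ≤ M * r^2 := by
    calc ∑ l : Fin M, ‖Z (m.succAbove l)‖^2 ≤ ∑ _l : Fin M, r^2 :=
          Finset.sum_le_sum fun l _ => by
            have := h (m.succAbove l); nlinarith [norm_nonneg (Z (m.succAbove l))]
      _ = M * r^2 := by simp [mul_comm]
  have hM : (M:ℝ) * r^2 ≤ ((M:ℝ) * r)^2 := by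
    have : (M:ℝ) ≤ (M:ℝ)^2 := by
      have : (M:ℕ) ≤ M^2 := Nat.le_self_pow two_ne_zero M
      exact_mod_cast this
    nlinarith [sq_nonneg r]
  rw [h1]
  calc Real.sqrt (∑ l : Fin M, ‖Z (m.succAbove l)‖^2) ≤ Real.sqrt (((M:ℝ)*r)^2) :=
        Real.sqrt_le_sqrt (le_trans h2 hM)
    _ = M * r := Real.sqrt_sq (by positivity)

lemma norm_mean_le' {d N : ℕ} (hN : 0 < N) (Y : Fin N → Vec d) (r : ℝ)
    (h : ∀ i, ‖Y i‖ ≤ r) : ‖(N:ℝ)⁻¹ • ∑ i, Y i‖ ≤ r := by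
  have hr : 0 ≤ r := le_trans (norm_nonneg _) (h ⟨0, hN⟩)
  have hNpos : (0:ℝ) < N := by exact_mod_cast hN
  calc ‖(N:ℝ)⁻¹ • ∑ i, Y i‖ = (N:ℝ)⁻¹ * ‖∑ i, Y i‖ := by
        rw [norm_smul, Real.norm_eq_abs, abs_of_nonneg (by positivity)]
    _ ≤ (N:ℝ)⁻¹ * ((N:ℝ) * r) := by
        gcongr
        calc ‖∑ i, Y i‖ ≤ ∑ i, ‖Y i‖ := norm_sum_le _ _
          _ ≤ ∑ _i : Fin N, r := Finset.sum_le_sum fun i _ => h i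
          _ = (N:ℝ) * r := by simp [mul_comm]
    _ = r := by field_simp

lemma exp_sub_exp_le' {u v r : ℝ} (hu : u ≤ r) (hv : v ≤ r) :
    |Real.exp u - Real.exp v| ≤ Real.exp r * |u - v| := by
  wlog h : v ≤ u generalizing u v
  · rw [abs_sub_comm, abs_sub_comm u v]; exact this hv hu (le_of_not_ge h)
  rw [abs_of_nonneg (sub_nonneg.mpr (Real.exp_le_exp.mpr h)), abs_of_nonneg (sub_nonneg.mpr h)]
  have h2 : Real.exp u * Real.exp (v - u) = Real.exp v := by
    rw [← Real.exp_add]; ring_nf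
  have h3 := Real.add_one_le_exp (v - u)
  have h4 : Real.exp u ≤ Real.exp r := Real.exp_le_exp.mpr hu
  have h5 : (0:ℝ) < Real.exp u := Real.exp_pos u
  nlinarith [mul_le_mul_of_nonneg_left h3 h5.le]


theorem stmt5' {d N M : ℕ} (hd : 0 < d) (hN : 0 < N)
    (α : ℝ) (hα : 0 < α)
    (E : Fin (M + 1) → Vec d → Opp M d → ℝ)
    (C₁ s : ℝ) (hC₁ : 0 < C₁) (hs : 0 ≤ s)
    (hA1 : ∀ (m : Fin (M + 1)) (x₀ x₁ : Vec d) (y₀ y₁ : Opp M d),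
      |E m x₀ y₀ - E m x₁ y₁| ≤
        C₁ * (1 + pairNorm x₀ y₀ + pairNorm x₁ y₁) ^ s * pairNorm (x₀ - x₁) (y₀ - y₁))
    (ℓ c G : ℝ) (hℓ : 0 ≤ ℓ) (hc : 0 < c) (hG : 0 < G)
    (hA2 : ∀ (m : Fin (M + 1)) (x : Vec d) (y : Opp M d),
      (1 / c) * (pairNorm x y ^ ℓ - G) ≤ E m x y ∧ E m x y ≤ c * (pairNorm x y ^ ℓ + G)) :
    ∀ R > (0 : ℝ), ∃ C > (0 : ℝ), ∀ (X₀ X₁ : Fin (M + 1) → Fin N → Vec d),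
      max (confNorm X₀) (confNorm X₁) ≤ R →
      ∀ m : Fin (M + 1),
        ‖FNmap α E m X₀ - FNmap α E m X₁‖ ≤ C * confNorm (X₀ - X₁) := by
  intro R hR
  set B := ((M:ℝ)+1)*R with hBdef
  have hB0 : (0:ℝ) < B := by positivity
  set b := Real.exp (α * (G / c)) with hbdef
  have hb0 : (0:ℝ) < b := Real.exp_pos _
  set a := Real.exp (-(α * (c * (B ^ ℓ + G)))) with hadef
  have ha0 : (0:ℝ) < a := Real.exp_pos _
  have hpow0 : (0:ℝ) < (1 + 2*B)^s := Real.rpow_pos_of_pos (by linarith) s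
  set LE := C₁ * (1 + 2*B)^s * ((M:ℝ)+1) with hLEdef
  have hLE0 : (0:ℝ) < LE := by positivity
  set Lw := b * α * LE with hLwdef
  have hLw0 : (0:ℝ) < Lw := by positivity
  refine ⟨2*b*Lw*R/a^2 + 1, by positivity, ?_⟩
  intro X₀ X₁ hX m
  have hX0R : confNorm X₀ ≤ R := le_trans (le_max_left _ _) hX
  have hX1R : confNorm X₁ ≤ R := le_trans (le_max_right _ _) hX
  set D := confNorm (X₀ - X₁) with hDdef
  have hD0 : (0:ℝ) ≤ D := Real.sqrt_nonneg _
  have hN0 : (0:ℝ) < (N:ℝ) := by exact_mod_cast hN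
  set Y₀ : Opp M d := oppOf m fun l => (N:ℝ)⁻¹ • ∑ i, X₀ l i with hY₀def
  set Y₁ : Opp M d := oppOf m fun l => (N:ℝ)⁻¹ • ∑ i, X₁ l i with hY₁def
  have key : ∀ (X : Fin (M + 1) → Fin N → Vec d) (Y : Opp M d),
      confNorm X ≤ R → Y = oppOf m (fun l => (N:ℝ)⁻¹ • ∑ i, X l i) →
      ∀ i : Fin N,
        pairNorm (X m i) Y ≤ B ∧
        a ≤ Real.exp (-α * E m (X m i) Y) ∧
        Real.exp (-α * E m (X m i) Y) ≤ b ∧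
        -α * E m (X m i) Y ≤ α * (G/c) := by
    intro X Y hXR hYe i
    have hxi : ‖X m i‖ ≤ R := le_trans (norm_le_confNorm' X m i) hXR
    have hYn : ‖Y‖ ≤ M * R := by
      rw [hYe]
      exact norm_oppOf_le' m _ R hR.le fun l =>
        norm_mean_le' hN (X l) R fun j => le_trans (norm_le_confNorm' X l j) hXR
    have hp : pairNorm (X m i) Y ≤ B := by
      calc pairNorm (X m i) Y ≤ ‖X m i‖ + ‖Y‖ := pairNorm_le' _ _
        _ ≤ R + (M:ℝ) * R := add_le_add hxi hYn
        _ = B := by rw [hBdef]; ring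
    obtain ⟨hlo, hhi⟩ := hA2 m (X m i) Y
    have hpl : pairNorm (X m i) Y ^ ℓ ≤ B ^ ℓ :=
      Real.rpow_le_rpow (pairNorm_nonneg' _ _) hp hℓ
    have hEhi : E m (X m i) Y ≤ c * (B ^ ℓ + G) :=
      le_trans hhi (mul_le_mul_of_nonneg_left (by linarith) hc.le)
    have hElo : -(G/c) ≤ E m (X m i) Y := by
      have h0 : (0:ℝ) ≤ pairNorm (X m i) Y ^ ℓ := Real.rpow_nonneg (pairNorm_nonneg' _ _) ℓ
      have h1 : (1/c) * (0 - G) ≤ (1/c) * (pairNorm (X m i) Y ^ ℓ - G) := by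
        apply mul_le_mul_of_nonneg_left (by linarith) (by positivity)
      calc -(G/c) = (1/c) * (0 - G) := by ring
        _ ≤ E m (X m i) Y := le_trans h1 hlo
    have hexp1 : -α * E m (X m i) Y ≤ α * (G/c) := by
      have h2 := mul_le_mul_of_nonneg_left hElo hα.le
      linarith
    refine ⟨hp, ?_, ?_, hexp1⟩
    · rw [hadef]
      apply Real.exp_le_exp.mpr
      have h3 := mul_le_mul_of_nonneg_left hEhi hα.le
      linarith
    · rw [hbdef]; exact Real.exp_le_exp.mpr hexp1
  have K0 := key X₀ Y₀ hX0R hY₀def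
  have K1 := key X₁ Y₁ hX1R hY₁def
  set w₀ : Fin N → ℝ := fun i => Real.exp (-α * E m (X₀ m i) Y₀) with hw₀def
  set w₁ : Fin N → ℝ := fun i => Real.exp (-α * E m (X₁ m i) Y₁) with hw₁def
  have hw₀lo : ∀ i, a ≤ w₀ i := fun i => by simpa [hw₀def] using (K0 i).2.1
  have hw₀hi : ∀ i, w₀ i ≤ b := fun i => by simpa [hw₀def] using (K0 i).2.2.1
  have hw₁lo : ∀ i, a ≤ w₁ i := fun i => by simpa [hw₁def] using (K1 i).2.1
  have hw₁hi : ∀ i, w₁ i ≤ b := fun i => by simpa [hw₁def] using (K1 i).2.2.1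
  have hw₀pos : ∀ i, 0 < w₀ i := fun i => lt_of_lt_of_le ha0 (hw₀lo i)
  have hw₁pos : ∀ i, 0 < w₁ i := fun i => lt_of_lt_of_le ha0 (hw₁lo i)
  have hS₀lo : (N:ℝ) * a ≤ ∑ j, w₀ j := by
    calc (N:ℝ) * a = ∑ _j : Fin N, a := by simp [mul_comm]
      _ ≤ ∑ j, w₀ j := Finset.sum_le_sum fun j _ => hw₀lo j
  have hS₁lo : (N:ℝ) * a ≤ ∑ j, w₁ j := by
    calc (N:ℝ) * a = ∑ _j : Fin N, a := by simp [mul_comm]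
      _ ≤ ∑ j, w₁ j := Finset.sum_le_sum fun j _ => hw₁lo j
  have hS₀hi : ∑ j, w₀ j ≤ (N:ℝ) * b := by
    calc ∑ j, w₀ j ≤ ∑ _j : Fin N, b := Finset.sum_le_sum fun j _ => hw₀hi j
      _ = (N:ℝ) * b := by simp [mul_comm]
  have hS₁hi : ∑ j, w₁ j ≤ (N:ℝ) * b := by
    calc ∑ j, w₁ j ≤ ∑ _j : Fin N, b := Finset.sum_le_sum fun j _ => hw₁hi j
      _ = (N:ℝ) * b := by simp [mul_comm]
  have hS₀pos : (0:ℝ) < ∑ j, w₀ j := lt_of_lt_of_le (by positivity) hS₀lo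
  have hS₁pos : (0:ℝ) < ∑ j, w₁ j := lt_of_lt_of_le (by positivity) hS₁lo
  have hΔx : ∀ (l : Fin (M+1)) (i : Fin N), ‖X₀ l i - X₁ l i‖ ≤ D := by
    intro l i
    have h := norm_le_confNorm' (X₀ - X₁) l i
    simpa using h
  have hΔY : ‖Y₀ - Y₁‖ ≤ (M:ℝ) * D := by
    have heq : Y₀ - Y₁ = oppOf m fun l => (N:ℝ)⁻¹ • ∑ i, (X₀ l i - X₁ l i) := by
      rw [hY₀def, hY₁def]
      ext p
      simp [oppOf, Finset.sum_sub_distrib, smul_sub, mul_sub]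
    rw [heq]
    exact norm_oppOf_le' m _ D hD0 fun l =>
      norm_mean_le' hN (fun i => X₀ l i - X₁ l i) D fun i => hΔx l i
  have hΔE : ∀ i, |E m (X₀ m i) Y₀ - E m (X₁ m i) Y₁| ≤ LE * D := by
    intro i
    have h1 := hA1 m (X₀ m i) (X₁ m i) Y₀ Y₁
    have hp0 : pairNorm (X₀ m i) Y₀ ≤ B := (K0 i).1
    have hp1 : pairNorm (X₁ m i) Y₁ ≤ B := (K1 i).1
    have hpn0 := pairNorm_nonneg' (X₀ m i) Y₀
    have hpn1 := pairNorm_nonneg' (X₁ m i) Y₁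
    have hpowle : (1 + pairNorm (X₀ m i) Y₀ + pairNorm (X₁ m i) Y₁)^s ≤ (1+2*B)^s :=
      Real.rpow_le_rpow (by linarith) (by linarith) hs
    have hpn : pairNorm (X₀ m i - X₁ m i) (Y₀ - Y₁) ≤ ((M:ℝ)+1) * D := by
      calc pairNorm (X₀ m i - X₁ m i) (Y₀ - Y₁) ≤ ‖X₀ m i - X₁ m i‖ + ‖Y₀ - Y₁‖ :=
            pairNorm_le' _ _
        _ ≤ D + (M:ℝ)*D := add_le_add (hΔx m i) hΔY
        _ = ((M:ℝ)+1)*D := by ring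
    calc |E m (X₀ m i) Y₀ - E m (X₁ m i) Y₁|
        ≤ C₁ * (1 + pairNorm (X₀ m i) Y₀ + pairNorm (X₁ m i) Y₁)^s *
          pairNorm (X₀ m i - X₁ m i) (Y₀ - Y₁) := h1
      _ ≤ C₁ * (1+2*B)^s * (((M:ℝ)+1)*D) := by
          apply mul_le_mul (mul_le_mul_of_nonneg_left hpowle hC₁.le) hpn
            (pairNorm_nonneg' _ _) (by positivity)
      _ = LE * D := by rw [hLEdef]; ring
  have hΔw : ∀ i, |w₀ i - w₁ i| ≤ Lw * D := by
    intro i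
    have hu : -α * E m (X₀ m i) Y₀ ≤ α * (G/c) := (K0 i).2.2.2
    have hv : -α * E m (X₁ m i) Y₁ ≤ α * (G/c) := (K1 i).2.2.2
    have h1 := exp_sub_exp_le' hu hv
    have habs : |(-α * E m (X₀ m i) Y₀) - (-α * E m (X₁ m i) Y₁)|
        = α * |E m (X₀ m i) Y₀ - E m (X₁ m i) Y₁| := by
      rw [show (-α * E m (X₀ m i) Y₀) - (-α * E m (X₁ m i) Y₁)
          = -(α * (E m (X₀ m i) Y₀ - E m (X₁ m i) Y₁)) by ring, abs_neg, abs_mul,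
        abs_of_pos hα]
    calc |w₀ i - w₁ i| ≤ b * |(-α * E m (X₀ m i) Y₀) - (-α * E m (X₁ m i) Y₁)| := by
          simpa [hw₀def, hw₁def, hbdef] using h1
      _ = b * (α * |E m (X₀ m i) Y₀ - E m (X₁ m i) Y₁|) := by rw [habs]
      _ ≤ b * (α * (LE * D)) := by
          apply mul_le_mul_of_nonneg_left (mul_le_mul_of_nonneg_left (hΔE i) hα.le) hb0.le
      _ = Lw * D := by rw [hLwdef]; ring
  have hΔS : |(∑ j, w₀ j) - ∑ j, w₁ j| ≤ (N:ℝ) * (Lw * D) := by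
    calc |(∑ j, w₀ j) - ∑ j, w₁ j| = |∑ j, (w₀ j - w₁ j)| := by rw [Finset.sum_sub_distrib]
      _ ≤ ∑ j, |w₀ j - w₁ j| := Finset.abs_sum_le_sum_abs _ _
      _ ≤ ∑ _j : Fin N, Lw * D := Finset.sum_le_sum fun j _ => hΔw j
      _ = (N:ℝ) * (Lw*D) := by simp [mul_comm]
  have hNa : (0:ℝ) ≤ (N:ℝ)*a := mul_nonneg hN0.le ha0.le
  have hLwD : (0:ℝ) ≤ Lw*D := mul_nonneg hLw0.le hD0
  have hKnn : (0:ℝ) ≤ 2*b*Lw*D/((N:ℝ)*a^2) :=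
    div_nonneg (mul_nonneg (mul_nonneg (mul_nonneg (by norm_num) hb0.le) hLw0.le) hD0)
      (mul_nonneg hN0.le (sq_nonneg a))
  have hq : ∀ i, |w₀ i / (∑ j, w₀ j) - w₁ i / (∑ j, w₁ j)| ≤ 2*b*Lw*D/((N:ℝ)*a^2) := by
    intro i
    have h1 : w₀ i / (∑ j, w₀ j) - w₁ i / (∑ j, w₁ j)
        = (w₀ i * (∑ j, w₁ j) - (∑ j, w₀ j) * w₁ i) / ((∑ j, w₀ j) * (∑ j, w₁ j)) :=
      div_sub_div _ _ hS₀pos.ne' hS₁pos.ne'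
    rw [h1, abs_div]
    have hnum : |w₀ i * (∑ j, w₁ j) - (∑ j, w₀ j) * w₁ i| ≤ 2*(N:ℝ)*b*(Lw*D) := by
      have h2 : w₀ i * (∑ j, w₁ j) - (∑ j, w₀ j) * w₁ i
          = (w₀ i - w₁ i) * (∑ j, w₁ j) + w₁ i * ((∑ j, w₁ j) - (∑ j, w₀ j)) := by ring
      rw [h2]
      calc |(w₀ i - w₁ i) * (∑ j, w₁ j) + w₁ i * ((∑ j, w₁ j) - (∑ j, w₀ j))|
          ≤ |(w₀ i - w₁ i) * (∑ j, w₁ j)| + |w₁ i * ((∑ j, w₁ j) - (∑ j, w₀ j))| :=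
            abs_add_le _ _
        _ = |w₀ i - w₁ i| * |∑ j, w₁ j| + |w₁ i| * |(∑ j, w₁ j) - (∑ j, w₀ j)| := by
            rw [abs_mul, abs_mul]
        _ ≤ (Lw*D) * ((N:ℝ)*b) + b * ((N:ℝ)*(Lw*D)) := by
            apply add_le_add
            · apply mul_le_mul (hΔw i) ?_ (abs_nonneg _) hLwD
              rw [abs_of_pos hS₁pos]; exact hS₁hi
            · apply mul_le_mul ?_ ?_ (abs_nonneg _) hb0.le
              · rw [abs_of_pos (hw₁pos i)]; exact hw₁hi i
              · rw [abs_sub_comm]; exact hΔS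
        _ = 2*(N:ℝ)*b*(Lw*D) := by ring
    have hden : (N:ℝ)^2 * a^2 ≤ |(∑ j, w₀ j) * (∑ j, w₁ j)| := by
      rw [abs_of_pos (mul_pos hS₀pos hS₁pos)]
      calc (N:ℝ)^2 * a^2 = ((N:ℝ)*a)*((N:ℝ)*a) := by ring
        _ ≤ (∑ j, w₀ j) * (∑ j, w₁ j) :=
            mul_le_mul hS₀lo hS₁lo hNa (le_trans hNa hS₀lo)
    calc |w₀ i * (∑ j, w₁ j) - (∑ j, w₀ j) * w₁ i| / |(∑ j, w₀ j) * (∑ j, w₁ j)|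
        ≤ (2*(N:ℝ)*b*(Lw*D)) / ((N:ℝ)^2 * a^2) :=
          div_le_div₀ (mul_nonneg (mul_nonneg (mul_nonneg (by norm_num) hN0.le) hb0.le) hLwD)
            hnum (by nlinarith [sq_nonneg ((N:ℝ)*a), mul_pos hN0 ha0]) hden
      _ = 2*b*Lw*D/((N:ℝ)*a^2) := by field_simp
  have h0 : FNmap α E m X₀ = ∑ i, (w₀ i / ∑ j, w₀ j) • X₀ m i := by
    simp only [hw₀def, hY₀def, FNmap]
  have h1 : FNmap α E m X₁ = ∑ i, (w₁ i / ∑ j, w₁ j) • X₁ m i := by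
    simp only [hw₁def, hY₁def, FNmap]
  have hFeq : FNmap α E m X₀ - FNmap α E m X₁
      = ∑ i, ((w₀ i / (∑ j, w₀ j) - w₁ i / (∑ j, w₁ j)) • X₀ m i
          + (w₁ i / (∑ j, w₁ j)) • (X₀ m i - X₁ m i)) := by
    rw [h0, h1, ← Finset.sum_sub_distrib]
    apply Finset.sum_congr rfl
    intro i _
    rw [sub_smul, smul_sub]
    abel
  have hterm : ∀ i : Fin N,
      ‖(w₀ i / (∑ j, w₀ j) - w₁ i / (∑ j, w₁ j)) • X₀ m i
        + (w₁ i / (∑ j, w₁ j)) • (X₀ m i - X₁ m i)‖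
      ≤ 2*b*Lw*D/((N:ℝ)*a^2) * R + (w₁ i / (∑ j, w₁ j)) * D := by
    intro i
    have hx0 : ‖X₀ m i‖ ≤ R := le_trans (norm_le_confNorm' X₀ m i) hX0R
    have hq1 : (0:ℝ) ≤ w₁ i / (∑ j, w₁ j) := div_nonneg (hw₁pos i).le hS₁pos.le
    calc ‖(w₀ i / (∑ j, w₀ j) - w₁ i / (∑ j, w₁ j)) • X₀ m i
        + (w₁ i / (∑ j, w₁ j)) • (X₀ m i - X₁ m i)‖
        ≤ ‖(w₀ i / (∑ j, w₀ j) - w₁ i / (∑ j, w₁ j)) • X₀ m i‖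
          + ‖(w₁ i / (∑ j, w₁ j)) • (X₀ m i - X₁ m i)‖ := norm_add_le _ _
      _ = |w₀ i / (∑ j, w₀ j) - w₁ i / (∑ j, w₁ j)| * ‖X₀ m i‖
          + |w₁ i / (∑ j, w₁ j)| * ‖X₀ m i - X₁ m i‖ := by
          rw [norm_smul, norm_smul, Real.norm_eq_abs, Real.norm_eq_abs]
      _ ≤ 2*b*Lw*D/((N:ℝ)*a^2) * R + (w₁ i / (∑ j, w₁ j)) * D := by
          apply add_le_add
          · exact mul_le_mul (hq i) hx0 (norm_nonneg _) hKnn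
          · rw [abs_of_nonneg hq1]
            exact mul_le_mul_of_nonneg_left (hΔx m i) hq1
  have hsum1 : ∑ i, w₁ i / (∑ j, w₁ j) = 1 := by
    rw [← Finset.sum_div]; exact div_self (ne_of_gt hS₁pos)
  calc ‖FNmap α E m X₀ - FNmap α E m X₁‖
      = ‖∑ i, ((w₀ i / (∑ j, w₀ j) - w₁ i / (∑ j, w₁ j)) • X₀ m i
          + (w₁ i / (∑ j, w₁ j)) • (X₀ m i - X₁ m i))‖ := by rw [hFeq]
    _ ≤ ∑ i, ‖(w₀ i / (∑ j, w₀ j) - w₁ i / (∑ j, w₁ j)) • X₀ m i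
          + (w₁ i / (∑ j, w₁ j)) • (X₀ m i - X₁ m i)‖ := norm_sum_le _ _
    _ ≤ ∑ i, (2*b*Lw*D/((N:ℝ)*a^2) * R + (w₁ i / (∑ j, w₁ j)) * D) :=
        Finset.sum_le_sum fun i _ => hterm i
    _ = (N:ℝ) * (2*b*Lw*D/((N:ℝ)*a^2) * R) + (∑ i, w₁ i / (∑ j, w₁ j)) * D := by
        rw [Finset.sum_add_distrib, Finset.sum_const, ← Finset.sum_mul]
        simp [nsmul_eq_mul]
    _ = (2*b*Lw*R/a^2 + 1) * D := by
        rw [hsum1]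
        field_simp


/-- local Lipschitz property of `F_N^m`. -/
theorem stmt5 {d N M : ℕ} (hd : 0 < d) (hN : 0 < N)
    (α : ℝ) (hα : 0 < α)
    (E : Fin (M + 1) → Vec d → Opp M d → ℝ)
    -- Assumption (A1)
    (C₁ s : ℝ) (hC₁ : 0 < C₁) (hs : 0 ≤ s)
    (hA1 : ∀ (m : Fin (M + 1)) (x₀ x₁ : Vec d) (y₀ y₁ : Opp M d),
      |E m x₀ y₀ - E m x₁ y₁| ≤
        C₁ * (1 + pairNorm x₀ y₀ + pairNorm x₁ y₁) ^ s * pairNorm (x₀ - x₁) (y₀ - y₁))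
    -- Assumption (A2)
    (ℓ c G : ℝ) (hℓ : 0 ≤ ℓ) (hc : 0 < c) (hG : 0 < G)
    (hA2 : ∀ (m : Fin (M + 1)) (x : Vec d) (y : Opp M d),
      (1 / c) * (pairNorm x y ^ ℓ - G) ≤ E m x y ∧ E m x y ≤ c * (pairNorm x y ^ ℓ + G)) :
    ∀ R > (0 : ℝ), ∃ C > (0 : ℝ), ∀ (X₀ X₁ : Fin (M + 1) → Fin N → Vec d),
      max (confNorm X₀) (confNorm X₁) ≤ R →
      ∀ m : Fin (M + 1),
        ‖FNmap α E m X₀ - FNmap α E m X₁‖ ≤ C * confNorm (X₀ - X₁) := by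
  exact stmt5' hd hN α hα E C₁ s hC₁ hs hA1 ℓ c G hℓ hc hG hA2
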